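/- Let (Ω, 𝓕, ν) be a probability space and let Θ = [-1,1]^M be equipped with its Borel σ-algebra 𝓔 and the uniform probability measure λ(dθ) = 2^{-M} dθ. Let (f_n)_{n∈ℕ} be a family of functions f_n : Θ × Ω → ℝ such that: (1) there exists f ∈ L²(Θ, 𝓔, λ) with Var_λ(f) > 0 such that for ν-almost all ω ∈ Ω, f_n(θ, ω) → f(θ) as n → ∞ for all θ ∈ Θ; and (2) for ν-almost all ω ∈ Ω, f_n(·, ω) is 𝓔-measurable and there exists φ_ω ∈ L²(Θ, 𝓔, λ) with |f_n(θ, ω)| ≤ φ_ω(θ) for all θ ∈ Θ and all n. Then for each j ∈ {1, …, M}, the stochastic first-order Sobol' indices satisfy S_j(f_n(·, ω)) → S_j(f) as n → ∞, for ν-almost all ω ∈ Ω. -/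

import Mathlib

open MeasureTheory ProbabilityTheory Filter

/-- The uniform probability measure `λ(dθ) = 2^{-M} dθ` on `Θ = [-1,1]^M`,
realized as the product of `M` copies of the normalized Lebesgue measure on
`[-1,1]`, on `ℝ^M` with its Borel (product) σ-algebra. -/
noncomputable def uniformCube (M : ℕ) : Measure (Fin M → ℝ) :=
  Measure.pi fun _ => (2 : ENNReal)⁻¹ • volume.restrict (Set.Icc (-1 : ℝ) 1)

instance uniformCube_isProbabilityMeasure (M : ℕ) :
    IsProbabilityMeasure (uniformCube M) := by
  have h : IsProbabilityMeasure ((2 : ENNReal)⁻¹ • volume.restrict (Set.Icc (-1 : ℝ) 1)) := by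
    constructor
    rw [Measure.smul_apply, Measure.restrict_apply MeasurableSet.univ, Set.univ_inter,
      Real.volume_Icc]
    norm_num
    exact ENNReal.inv_mul_cancel (by norm_num) (by norm_num)
  unfold uniformCube
  infer_instance

lemma integral_sq_eq_norm_sq {α : Type*} [MeasurableSpace α] {μ : Measure α} (h : Lp ℝ 2 μ) :
    ∫ x, (h x) ^ 2 ∂μ = ‖h‖ ^ 2 := by
  rw [← real_inner_self_eq_norm_sq, L2.inner_def]
  refine integral_congr_ae (Eventually.of_forall fun x => ?_)
  simp [pow_two]

lemma condexp_ae_eq_condExpL2' {α : Type*} {m m0 : MeasurableSpace α} (hm : m ≤ m0)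
    (μ : Measure α) [IsFiniteMeasure μ] {f : α → ℝ} (hf : MemLp f 2 μ) :
    μ[f|m] =ᵐ[μ] (condExpL2 ℝ ℝ hm (hf.toLp f) : α → ℝ) := by
  refine (ae_eq_condExp_of_forall_setIntegral_eq hm (hf.integrable one_le_two)
    (fun s hs hμs => integrableOn_condExpL2_of_measure_ne_top hm hμs.ne _)
    (fun s hs hμs => ?_) (aestronglyMeasurable_condExpL2 hm _)).symm
  rw [integral_condExpL2_eq hm (hf.toLp f) hs hμs.ne]
  exact setIntegral_congr_ae (hm s hs) (hf.coeFn_toLp.mono fun x hx _ => hx)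

/-- The sub-σ-algebra generated by the j-th coordinate. -/
def mJ (M : ℕ) (j : Fin M) : MeasurableSpace (Fin M → ℝ) :=
  MeasurableSpace.comap (fun θ : Fin M → ℝ => θ j) inferInstance

/-- Almost sure convergence of stochastic first-order Sobol' indices:
if for ν-a.a. `ω` the functions `f_n(·, ω)` are measurable, converge pointwise
on `Θ` to `f ∈ L²(Θ, λ)` with `Var_λ(f) > 0`, and are dominated by some
`φ_ω ∈ L²(Θ, λ)`, then for each coordinate `j`,
`S_j(f_n(·, ω)) = Var(E[f_n(·,ω)|θ_j])/Var(f_n(·,ω)) → S_j(f)` ν-almost surely. -/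
theorem stochastic_sobol_index_tendsto_ae
    {Ω : Type*} [MeasurableSpace Ω] (ν : Measure Ω) [IsProbabilityMeasure ν]
    {M : ℕ} (f : ℕ → (Fin M → ℝ) → Ω → ℝ) (flim : (Fin M → ℝ) → ℝ)
    (hflim : MemLp flim 2 (uniformCube M))
    (hvar : 0 < variance flim (uniformCube M))
    (hconv : ∀ᵐ ω ∂ν, ∀ θ, Tendsto (fun n => f n θ ω) atTop (nhds (flim θ)))
    (hmeas_bdd : ∀ᵐ ω ∂ν, (∀ n, Measurable fun θ => f n θ ω) ∧
      ∃ φ : (Fin M → ℝ) → ℝ, MemLp φ 2 (uniformCube M) ∧ ∀ θ, ∀ n, |f n θ ω| ≤ φ θ) :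
    ∀ j : Fin M, ∀ᵐ ω ∂ν,
      Tendsto
        (fun n =>
          variance
              ((uniformCube M)[(fun θ => f n θ ω)|
                MeasurableSpace.comap (fun θ : Fin M → ℝ => θ j) inferInstance])
              (uniformCube M) /
            variance (fun θ => f n θ ω) (uniformCube M))
        atTop
        (nhds
          (variance
              ((uniformCube M)[flim|
                MeasurableSpace.comap (fun θ : Fin M → ℝ => θ j) inferInstance])
              (uniformCube M) /
            variance flim (uniformCube M))) := by
  intro j
  set μ := uniformCube M with hμdef
  have hm : mJ M j ≤ MeasurableSpace.pi := (measurable_pi_apply j).comap_le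
  filter_upwards [hconv, hmeas_bdd] with ω h1 h2
  obtain ⟨hmeasn, φ, hφ, hbd⟩ := h2
  set g : ℕ → (Fin M → ℝ) → ℝ := fun n θ => f n θ ω with hgdef
  have hnb : ∀ θ n, ‖g n θ‖ ≤ φ θ := fun θ n => by
    rw [Real.norm_eq_abs]; exact hbd θ n
  have hg2 : ∀ n, MemLp (g n) 2 μ := fun n =>
    MemLp.of_le hφ (hmeasn n).aestronglyMeasurable
      (Eventually.of_forall fun θ => (hnb θ n).trans (le_abs_self _))
  -- uniform integrability from domination
  have hui : UnifIntegrable g 2 μ := by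
    intro ε hε
    obtain ⟨δ, hδ, h⟩ := unifIntegrable_const (μ := μ) (ι := ℕ) one_le_two
      ENNReal.ofNat_ne_top hφ hε
    refine ⟨δ, hδ, fun i s hs hμs => le_trans (eLpNorm_mono_ae ?_) (h i s hs hμs)⟩
    refine Eventually.of_forall fun θ => ?_
    by_cases hθ : θ ∈ s
    · simp only [Set.indicator_of_mem hθ]
      exact (hnb θ i).trans (le_abs_self _)
    · simp [Set.indicator_of_notMem hθ]
  -- L² convergence
  have hL2 : Tendsto (fun n => eLpNorm (g n - flim) 2 μ) atTop (nhds 0) :=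
    tendsto_Lp_finite_of_tendsto_ae one_le_two ENNReal.ofNat_ne_top
      (fun n => (hmeasn n).aestronglyMeasurable) hflim hui (Eventually.of_forall h1)
  set Fn : ℕ → Lp ℝ 2 μ := fun n => (hg2 n).toLp (g n) with hFndef
  set F : Lp ℝ 2 μ := hflim.toLp flim with hFdef
  have hFn : Tendsto Fn atTop (nhds F) := by
    rw [tendsto_iff_dist_tendsto_zero]
    have hd : ∀ n, dist (Fn n) F = (eLpNorm (g n - flim) 2 μ).toReal := fun n => by
      rw [Lp.dist_def]
      congr 1
      exact eLpNorm_congr_ae (((hg2 n).coeFn_toLp).sub hflim.coeFn_toLp)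
    simp_rw [hd]
    have := (ENNReal.tendsto_toReal (a := 0) (by simp)).comp hL2
    exact this
  -- conditional expectations converge in L²
  have hC : Tendsto (fun n => ((condExpL2 ℝ ℝ hm (Fn n) : lpMeas ℝ ℝ (mJ M j) 2 μ) : Lp ℝ 2 μ))
      atTop (nhds ((condExpL2 ℝ ℝ hm F : lpMeas ℝ ℝ (mJ M j) 2 μ) : Lp ℝ 2 μ)) :=
    (continuous_subtype_val.tendsto _).comp
      (((condExpL2 ℝ ℝ hm).continuous.tendsto F).comp hFn)
  -- key identity for the variance of a conditional expectation
  have key : ∀ (h : (Fin M → ℝ) → ℝ) (hh : MemLp h 2 μ),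
      variance (μ[h|mJ M j]) μ
        = ‖((condExpL2 ℝ ℝ hm (hh.toLp h) : lpMeas ℝ ℝ (mJ M j) 2 μ) : Lp ℝ 2 μ)‖ ^ 2
          - (∫ θ, h θ ∂μ) ^ 2 := by
    intro h hh
    have hae := condexp_ae_eq_condExpL2' hm μ hh
    have hmem : MemLp (μ[h|mJ M j]) 2 μ := (Lp.memLp _).ae_eq hae.symm
    rw [variance_eq_sub hmem, integral_condExp hm]
    congr 1
    rw [← integral_sq_eq_norm_sq]
    refine integral_congr_ae (hae.mono fun x hx => ?_)
    simp [hx]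
  -- convergence of basic integrals
  have hA : Tendsto (fun n => ∫ θ, g n θ ∂μ) atTop (nhds (∫ θ, flim θ ∂μ)) := by
    refine tendsto_integral_of_dominated_convergence φ
      (fun n => (hmeasn n).aestronglyMeasurable) (hφ.integrable one_le_two)
      (fun n => Eventually.of_forall fun θ => hnb θ n) (Eventually.of_forall h1)
  have hB : Tendsto (fun n => ∫ θ, (g n θ) ^ 2 ∂μ) atTop (nhds (∫ θ, (flim θ) ^ 2 ∂μ)) := by
    refine tendsto_integral_of_dominated_convergence (fun θ => φ θ ^ 2)
      (fun n => ((hmeasn n).pow_const 2).aestronglyMeasurable) hφ.integrable_sq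
      (fun n => Eventually.of_forall fun θ => ?_) (Eventually.of_forall fun θ => (h1 θ).pow 2)
    rw [Real.norm_eq_abs, abs_pow]
    exact pow_le_pow_left₀ (abs_nonneg _) (hbd θ n) 2
  -- numerator convergence
  have hnum : Tendsto (fun n => variance (μ[g n|mJ M j]) μ) atTop (nhds (variance (μ[flim|mJ M j]) μ)) := by
    have h2 : Tendsto (fun n =>
        ‖((condExpL2 ℝ ℝ hm (Fn n) : lpMeas ℝ ℝ (mJ M j) 2 μ) : Lp ℝ 2 μ)‖ ^ 2
          - (∫ θ, g n θ ∂μ) ^ 2) atTop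
        (nhds (‖((condExpL2 ℝ ℝ hm F : lpMeas ℝ ℝ (mJ M j) 2 μ) : Lp ℝ 2 μ)‖ ^ 2
          - (∫ θ, flim θ ∂μ) ^ 2)) :=
      (((continuous_norm.tendsto _).comp hC).pow 2).sub (hA.pow 2)
    refine Tendsto.congr (fun n => ?_) ((key flim hflim ▸ h2 : _))
    exact (key (g n) (hg2 n)).symm
  -- denominator convergence
  have hden : Tendsto (fun n => variance (g n) μ) atTop (nhds (variance flim μ)) := by
    have h2 : Tendsto (fun n => (∫ θ, (g n θ) ^ 2 ∂μ) - (∫ θ, g n θ ∂μ) ^ 2) atTop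
        (nhds ((∫ θ, (flim θ) ^ 2 ∂μ) - (∫ θ, flim θ ∂μ) ^ 2)) := hB.sub (hA.pow 2)
    have e : ∀ (h : (Fin M → ℝ) → ℝ), MemLp h 2 μ →
        variance h μ = (∫ θ, (h θ) ^ 2 ∂μ) - (∫ θ, h θ ∂μ) ^ 2 := by
      intro h hh
      rw [variance_eq_sub hh]
      rfl
    rw [e flim hflim]
    exact Tendsto.congr (fun n => (e (g n) (hg2 n)).symm) h2
  exact hnum.div hden hvar.ne'
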